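/- Let S ⊆ ℤ^d be a finitely generated subsemigroup with S - S = ℤ^d and S ≠ ℤ^d, and let a be the sum of a generating set of S. Then -k•a ∉ S for every integer k ≥ 1. -/

import Mathlib

theorem stmt_1 (d r : ℕ) (S : AddSubmonoid (Fin d → ℤ)) (e : Fin r → (Fin d → ℤ))
    (hgen : S = AddSubmonoid.closure (Set.range e))
    (hgrp : ∀ x : Fin d → ℤ, ∃ s ∈ S, ∃ t ∈ S, x = s - t)
    (hne : (S : Set (Fin d → ℤ)) ≠ Set.univ)
    (a : Fin d → ℤ) (ha : a = ∑ i, e i) :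
    ∀ k : ℕ, 1 ≤ k → -(k • a) ∉ S := by
  intro k hk hmem
  have he : ∀ i, e i ∈ S := by
    intro i
    rw [hgen]
    exact AddSubmonoid.subset_closure ⟨i, rfl⟩
  have haS : a ∈ S := by
    rw [ha]; exact S.sum_mem fun i _ => he i
  -- -a ∈ S
  have hnegA : -a ∈ S := by
    have h1 : (k - 1) • a ∈ S := AddSubmonoid.nsmul_mem S haS _
    have h2 : -(k • a) + (k - 1) • a = -a := by
      obtain ⟨m, rfl⟩ : ∃ m, k = m + 1 := ⟨k - 1, by omega⟩
      rw [Nat.add_sub_cancel, add_nsmul, one_nsmul]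
      abel
    have := S.add_mem hmem h1
    rwa [h2] at this
  -- each -e i ∈ S
  have hnegE : ∀ i, -e i ∈ S := by
    intro i
    have h1 : (∑ j ∈ Finset.univ.erase i, e j) ∈ S :=
      S.sum_mem fun j _ => he j
    have h2 : -a + (∑ j ∈ Finset.univ.erase i, e j) = -e i := by
      rw [ha, ← Finset.add_sum_erase _ _ (Finset.mem_univ i)]
      abel
    have := S.add_mem hnegA h1
    rwa [h2] at this
  -- S closed under negation
  have hneg : ∀ x ∈ S, -x ∈ S := by
    intro x hx
    rw [hgen] at hx
    induction hx using AddSubmonoid.closure_induction with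
    | mem y hy => obtain ⟨i, rfl⟩ := hy; exact hnegE i
    | zero => simpa using S.zero_mem
    | add y z _ _ hy hz => rw [neg_add]; exact S.add_mem hy hz
  apply hne
  ext x
  simp only [Set.mem_univ, iff_true]
  obtain ⟨s, hs, t, ht, rfl⟩ := hgrp x
  have := S.add_mem hs (hneg t ht)
  simpa [sub_eq_add_neg] using this
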